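/- For ξ > 2 and η = (2 + √ξ)/(ξ + √ξ), the function G_ξ(z) = ∫_{−∞}^{∞} exp(−e^{(y−z)/η} − η e^{−z} ∫_0^{e^{(y−z)/η}} s^{−1−η}(1 − e^{−s}) ds) · exp(−y − e^{−y}) dy is nondecreasing in z, with limit 0 as z → −∞ and limit 1 as z → +∞; hence G_ξ is a cumulative distribution function. -/

import Mathlib

open MeasureTheory Filter

noncomputable def Gxi (η : ℝ) (z : ℝ) : ℝ :=
  ∫ y : ℝ, Real.exp (-(Real.exp ((y - z) / η))
      - η * Real.exp (-z) *
        ∫ s in (0:ℝ)..(Real.exp ((y - z) / η)), s ^ (-1 - η) * (1 - Real.exp (-s)))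
    * Real.exp (-y - Real.exp (-y))

open Set Real

/-! ### Auxiliary definitions -/

noncomputable def lam (y : ℝ) : ℝ := Real.exp (-y - Real.exp (-y))

noncomputable def gg (η s : ℝ) : ℝ := s ^ (-1 - η) * (1 - Real.exp (-s))

noncomputable def Ffun (η u : ℝ) : ℝ := ∫ s in (0:ℝ)..u, gg η s

noncomputable def AA (η z y : ℝ) : ℝ := Real.exp ((y - z) / η)

noncomputable def itg (η z y : ℝ) : ℝ :=
  Real.exp (-(AA η z y) - η * Real.exp (-z) * Ffun η (AA η z y)) * lam y

lemma Gxi_eq (η z : ℝ) : Gxi η z = ∫ y, itg η z y := rfl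

/-! ### Elementary inequalities -/

lemma two_mul_le_exp (x : ℝ) : 2 * x ≤ Real.exp x := by
  rcases le_or_gt x 0 with h | h
  · nlinarith [Real.exp_pos x]
  · have h1 := Real.add_one_le_exp (x / 2)
    have h2 : Real.exp (x / 2) * Real.exp (x / 2) = Real.exp x := by
      rw [← Real.exp_add]; ring_nf
    nlinarith [Real.exp_pos (x / 2), sq_nonneg (1 - x / 2)]

/-! ### The Gumbel density -/

lemma lam_nonneg (y : ℝ) : 0 ≤ lam y := (Real.exp_pos _).le

lemma lam_cont : Continuous lam :=
  Real.continuous_exp.comp (continuous_neg.sub (Real.continuous_exp.comp continuous_neg))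

lemma phi_hasDeriv (y : ℝ) :
    HasDerivAt (fun t : ℝ => Real.exp (-Real.exp (-t))) (lam y) y := by
  have h0 : HasDerivAt (fun t : ℝ => Real.exp (-t)) (-Real.exp (-y)) y := by
    simpa [Function.comp_def] using (Real.hasDerivAt_exp (-y)).comp y (hasDerivAt_neg y)
  have h1 : HasDerivAt (fun t : ℝ => -Real.exp (-t)) (Real.exp (-y)) y := by
    simpa [Pi.neg_def] using h0.neg
  have h2 := (Real.hasDerivAt_exp (-Real.exp (-y))).comp y h1
  simp only [Function.comp_def] at h2
  refine h2.congr_deriv ?_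
  rw [lam, show -y - Real.exp (-y) = -Real.exp (-y) + -y by ring, Real.exp_add]

lemma phi_tendsto_atTop :
    Tendsto (fun t : ℝ => Real.exp (-Real.exp (-t))) atTop (nhds 1) := by
  have h : Tendsto (fun t : ℝ => -Real.exp (-t)) atTop (nhds 0) := by
    simpa using (Real.tendsto_exp_atBot.comp tendsto_neg_atTop_atBot).neg
  have := (Real.continuous_exp.tendsto 0).comp h
  simpa [Function.comp_def, Real.exp_zero] using this

lemma phi_tendsto_atBot :
    Tendsto (fun t : ℝ => Real.exp (-Real.exp (-t))) atBot (nhds 0) := by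
  have h : Tendsto (fun t : ℝ => -Real.exp (-t)) atBot atBot :=
    tendsto_neg_atTop_atBot.comp (Real.tendsto_exp_atTop.comp tendsto_neg_atBot_atTop)
  exact Real.tendsto_exp_atBot.comp h

lemma lam_le_exp (y : ℝ) : lam y ≤ Real.exp y := by
  apply Real.exp_le_exp.2
  have := two_mul_le_exp (-y)
  linarith

lemma lam_le_exp_neg (y : ℝ) : lam y ≤ Real.exp (-y) := by
  apply Real.exp_le_exp.2
  have := (Real.exp_pos (-y)).le
  linarith

lemma lam_integrableOn_Iic : IntegrableOn lam (Iic (0:ℝ)) := by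
  apply (integrableOn_exp_Iic 0).mono' lam_cont.aestronglyMeasurable.restrict
  exact Eventually.of_forall fun y => by
    rw [Real.norm_eq_abs, abs_of_nonneg (lam_nonneg y)]; exact lam_le_exp y

lemma lam_integrableOn_Ioi : IntegrableOn lam (Ioi (0:ℝ)) := by
  have h := exp_neg_integrableOn_Ioi 0 (by norm_num : (0:ℝ) < 1)
  apply h.mono' lam_cont.aestronglyMeasurable.restrict
  exact Eventually.of_forall fun y => by
    rw [Real.norm_eq_abs, abs_of_nonneg (lam_nonneg y)]
    simpa using lam_le_exp_neg y

lemma lam_integrable : Integrable lam := by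
  rw [← integrableOn_univ, ← Set.Iic_union_Ioi (a := (0:ℝ))]
  exact lam_integrableOn_Iic.union lam_integrableOn_Ioi

lemma lam_integral : ∫ y, lam y = 1 := by
  have h1 : ∫ y in Iic (0:ℝ), lam y = Real.exp (-Real.exp (-(0:ℝ))) - 0 :=
    integral_Iic_of_hasDerivAt_of_tendsto (phi_hasDeriv 0).continuousAt.continuousWithinAt
      (fun x _ => phi_hasDeriv x) lam_integrableOn_Iic phi_tendsto_atBot
  have h2 : ∫ y in Ioi (0:ℝ), lam y = 1 - Real.exp (-Real.exp (-(0:ℝ))) :=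
    integral_Ioi_of_hasDerivAt_of_tendsto (phi_hasDeriv 0).continuousAt.continuousWithinAt
      (fun x _ => phi_hasDeriv x) lam_integrableOn_Ioi phi_tendsto_atTop
  have h3 := intervalIntegral.integral_Iic_add_Ioi (b := (0:ℝ)) lam_integrableOn_Iic lam_integrableOn_Ioi
  rw [h1, h2] at h3
  rw [← h3]; ring

/-! ### The inner integrand -/

lemma gg_nonneg {η s : ℝ} (hs : 0 ≤ s) : 0 ≤ gg η s := by
  apply mul_nonneg (Real.rpow_nonneg hs _)
  have : Real.exp (-s) ≤ 1 := Real.exp_le_one_iff.2 (by linarith)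
  linarith

lemma gg_le {η s : ℝ} (hs : 0 < s) : gg η s ≤ s ^ (-η) := by
  have h1 : 1 - Real.exp (-s) ≤ s := by nlinarith [Real.add_one_le_exp (-s)]
  have h2 : 0 ≤ Real.exp (-s) := (Real.exp_pos _).le
  calc gg η s ≤ s ^ (-1 - η) * s := by
        apply mul_le_mul_of_nonneg_left h1 (Real.rpow_nonneg hs.le _)
    _ = s ^ (-η) := by
        rw [show s ^ (-1 - η) * s = s ^ (-1 - η) * s ^ (1:ℝ) by rw [Real.rpow_one],
          ← Real.rpow_add hs]
        rw [show (-1 - η + 1 : ℝ) = -η by ring]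

lemma gg_contOn (η : ℝ) : ContinuousOn (gg η) (Ioi (0:ℝ)) := by
  apply ContinuousOn.mul
  · exact continuousOn_id.rpow_const fun x hx => Or.inl (ne_of_gt hx)
  · exact (continuous_const.sub (Real.continuous_exp.comp continuous_neg)).continuousOn

lemma gg_intable {η : ℝ} (hη0 : 0 < η) (hη1 : η < 1) {u : ℝ} (hu : 0 ≤ u) :
    IntervalIntegrable (gg η) volume 0 u := by
  apply (intervalIntegral.intervalIntegrable_rpow' (r := -η) (by linarith)).mono_fun
  · rw [uIoc_of_le hu]
    exact ((gg_contOn η).mono Ioc_subset_Ioi_self).aestronglyMeasurable measurableSet_Ioc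
  · rw [uIoc_of_le hu, EventuallyLE, ae_restrict_iff' measurableSet_Ioc]
    apply Eventually.of_forall
    intro s hs
    rw [Real.norm_eq_abs, Real.norm_eq_abs, abs_of_nonneg (gg_nonneg hs.1.le),
      abs_of_nonneg (Real.rpow_nonneg hs.1.le _)]
    exact gg_le hs.1

lemma Ffun_nonneg {η : ℝ} (u : ℝ) (hu : 0 ≤ u) : 0 ≤ Ffun η u :=
  intervalIntegral.integral_nonneg hu fun s hs => gg_nonneg hs.1

lemma Ffun_monoOn {η : ℝ} (hη0 : 0 < η) (hη1 : η < 1) {u v : ℝ} (hu : 0 ≤ u) (huv : u ≤ v) :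
    Ffun η u ≤ Ffun η v := by
  have hv : 0 ≤ v := hu.trans huv
  have h0u := gg_intable hη0 hη1 hu
  have h0v := gg_intable hη0 hη1 hv
  have huv' : IntervalIntegrable (gg η) volume u v := by
    apply h0v.mono_set
    rw [uIcc_of_le huv, uIcc_of_le hv]
    exact Icc_subset_Icc hu le_rfl
  have hadd := intervalIntegral.integral_add_adjacent_intervals h0u huv'
  have hpos : 0 ≤ ∫ s in u..v, gg η s :=
    intervalIntegral.integral_nonneg huv fun s hs => gg_nonneg (hu.trans hs.1)
  unfold Ffun
  linarith [hadd]

lemma Ffun_max_monotone {η : ℝ} (hη0 : 0 < η) (hη1 : η < 1) :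
    Monotone (fun u => Ffun η (max u 0)) := fun u v h =>
  Ffun_monoOn hη0 hη1 (le_max_right u 0) (max_le_max h le_rfl)

/-! ### Properties of the main integrand -/

lemma AA_pos (η z y : ℝ) : 0 < AA η z y := Real.exp_pos _

lemma itg_nonneg (η z y : ℝ) : 0 ≤ itg η z y :=
  mul_nonneg (Real.exp_pos _).le (lam_nonneg y)

lemma exponent_nonpos {η : ℝ} (hη0 : 0 < η) (z y : ℝ) :
    -(AA η z y) - η * Real.exp (-z) * Ffun η (AA η z y) ≤ 0 := by
  have h1 := (AA_pos η z y).le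
  have h2 : 0 ≤ η * Real.exp (-z) * Ffun η (AA η z y) :=
    mul_nonneg (mul_nonneg hη0.le (Real.exp_pos _).le) (Ffun_nonneg _ h1)
  linarith [AA_pos η z y]

lemma itg_le_lam {η : ℝ} (hη0 : 0 < η) (z y : ℝ) : itg η z y ≤ lam y := by
  have h := Real.exp_le_one_iff.2 (exponent_nonpos hη0 z y)
  calc itg η z y ≤ 1 * lam y :=
        mul_le_mul_of_nonneg_right h (lam_nonneg y)
    _ = lam y := one_mul _

lemma itg_meas {η : ℝ} (hη0 : 0 < η) (hη1 : η < 1) (z : ℝ) :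
    AEStronglyMeasurable (itg η z) volume := by
  have hrw : itg η z =
      fun y => Real.exp (-(AA η z y) - η * Real.exp (-z) * Ffun η (max (AA η z y) 0)) * lam y := by
    funext y
    rw [itg, max_eq_left (AA_pos η z y).le]
  rw [hrw]
  have hmA : Measurable (fun y => AA η z y) :=
    Real.measurable_exp.comp ((measurable_id.sub_const z).div_const η)
  have hmF : Measurable (fun y => Ffun η (max (AA η z y) 0)) :=
    ((Ffun_max_monotone hη0 hη1).measurable).comp hmA
  exact ((Real.measurable_exp.comp
    (hmA.neg.sub (hmF.const_mul (η * Real.exp (-z))))).mul lam_cont.measurable).aestronglyMeasurable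

lemma itg_integrable {η : ℝ} (hη0 : 0 < η) (hη1 : η < 1) (z : ℝ) :
    Integrable (itg η z) :=
  lam_integrable.mono' (itg_meas hη0 hη1 z) (Eventually.of_forall fun y => by
    rw [Real.norm_eq_abs, abs_of_nonneg (itg_nonneg η z y)]; exact itg_le_lam hη0 z y)

theorem Gxi_is_cdf (ξ : ℝ) (hξ : 2 < ξ)
    (η : ℝ) (hη : η = (2 + Real.sqrt ξ) / (ξ + Real.sqrt ξ)) :
    Monotone (Gxi η) ∧
      Tendsto (Gxi η) atBot (nhds 0) ∧ Tendsto (Gxi η) atTop (nhds 1) := by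
  have hsx : 1 < Real.sqrt ξ := by
    have := Real.sqrt_lt_sqrt zero_le_one (by linarith : (1:ℝ) < ξ)
    simpa using this
  have hη0 : 0 < η := by
    rw [hη]; exact div_pos (by linarith) (by linarith)
  have hη1 : η < 1 := by
    rw [hη, div_lt_one (by linarith)]; linarith
  have hGxi : ∀ z, Gxi η z = ∫ y, itg η z y := Gxi_eq η
  refine ⟨?_, ?_, ?_⟩
  · -- Monotone
    intro z1 z2 hz
    rw [hGxi z1, hGxi z2]
    apply integral_mono (itg_integrable hη0 hη1 z1) (itg_integrable hη0 hη1 z2)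
    intro y
    have hA : AA η z2 y ≤ AA η z1 y :=
      Real.exp_le_exp.2 ((div_le_div_iff_of_pos_right hη0).2 (by linarith))
    have hF : Ffun η (AA η z2 y) ≤ Ffun η (AA η z1 y) :=
      Ffun_monoOn hη0 hη1 (AA_pos η z2 y).le hA
    have hc : η * Real.exp (-z1) * Ffun η (AA η z2 y) ≤ η * Real.exp (-z1) * Ffun η (AA η z1 y) :=
      mul_le_mul_of_nonneg_left hF (mul_nonneg hη0.le (Real.exp_pos _).le)
    have hc2 : η * Real.exp (-z2) * Ffun η (AA η z2 y) ≤ η * Real.exp (-z1) * Ffun η (AA η z2 y) :=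
      mul_le_mul_of_nonneg_right
        (mul_le_mul_of_nonneg_left (Real.exp_le_exp.2 (by linarith)) hη0.le)
        (Ffun_nonneg _ (AA_pos η z2 y).le)
    exact mul_le_mul_of_nonneg_right (Real.exp_le_exp.2 (by linarith)) (lam_nonneg y)
  · -- atBot
    have h0 : Tendsto (fun z => ∫ y, itg η z y) atBot (nhds (∫ _ : ℝ, (0:ℝ))) := by
      apply tendsto_integral_filter_of_dominated_convergence lam
        (Eventually.of_forall fun z => itg_meas hη0 hη1 z)
        (Eventually.of_forall fun z => Eventually.of_forall fun y => by
          rw [Real.norm_eq_abs, abs_of_nonneg (itg_nonneg η z y)]; exact itg_le_lam hη0 z y)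
        lam_integrable
      apply Eventually.of_forall
      intro y
      have hup : ∀ z, itg η z y ≤ Real.exp (-(AA η z y)) * lam y := by
        intro z
        apply mul_le_mul_of_nonneg_right _ (lam_nonneg y)
        apply Real.exp_le_exp.2
        have : 0 ≤ η * Real.exp (-z) * Ffun η (AA η z y) :=
          mul_nonneg (mul_nonneg hη0.le (Real.exp_pos _).le)
            (Ffun_nonneg _ (AA_pos η z y).le)
        linarith
      have hAtend : Tendsto (fun z => AA η z y) atBot atTop := by
        apply Real.tendsto_exp_atTop.comp
        apply Tendsto.atTop_div_const hη0
        convert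
          tendsto_atTop_add_const_left atBot y (tendsto_neg_atBot_atTop : Tendsto (fun z : ℝ => -z) atBot atTop) using 1
        funext z; ring
      have htend : Tendsto (fun z => Real.exp (-(AA η z y)) * lam y) atBot (nhds 0) := by
        have := (Real.tendsto_exp_atBot.comp (tendsto_neg_atTop_atBot.comp hAtend)).mul_const (lam y)
        simpa using this
      exact squeeze_zero (fun z => itg_nonneg η z y) hup htend
    rw [integral_zero] at h0
    have hfun : Gxi η = fun z => ∫ y, itg η z y := funext hGxi
    rw [hfun]
    exact h0
  · -- atTop
    have h1 : Tendsto (fun z => ∫ y, itg η z y) atTop (nhds (∫ y, lam y)) := by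
      apply tendsto_integral_filter_of_dominated_convergence lam
        (Eventually.of_forall fun z => itg_meas hη0 hη1 z)
        (Eventually.of_forall fun z => Eventually.of_forall fun y => by
          rw [Real.norm_eq_abs, abs_of_nonneg (itg_nonneg η z y)]; exact itg_le_lam hη0 z y)
        lam_integrable
      apply Eventually.of_forall
      intro y
      have hAtend : Tendsto (fun z => AA η z y) atTop (nhds 0) := by
        apply Real.tendsto_exp_atBot.comp
        apply Tendsto.atBot_div_const hη0
        convert
          tendsto_atBot_add_const_left atTop y (tendsto_neg_atTop_atBot : Tendsto (fun z : ℝ => -z) atTop atBot) using 1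
        funext z; ring
      have hE0 : Tendsto
          (fun z => -(AA η z y) - η * Real.exp (-z) * Ffun η (AA η z y)) atTop (nhds 0) := by
        apply tendsto_of_tendsto_of_tendsto_of_le_of_le'
          (g := fun z => -(AA η z y) - η * Real.exp (-z) * Ffun η 1) (h := fun _ => (0:ℝ))
        · have hz0 : Tendsto (fun z : ℝ => Real.exp (-z)) atTop (nhds 0) :=
            Real.tendsto_exp_atBot.comp tendsto_neg_atTop_atBot
          have := Tendsto.sub hAtend.neg ((hz0.const_mul η).mul_const (Ffun η 1))
          simpa using this
        · exact tendsto_const_nhds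
        · filter_upwards [eventually_ge_atTop y] with z hz
          have hA1 : AA η z y ≤ 1 := by
            rw [show (1:ℝ) = Real.exp 0 by simp]
            exact Real.exp_le_exp.2 (div_nonpos_of_nonpos_of_nonneg (by linarith) hη0.le)
          have hF1 : Ffun η (AA η z y) ≤ Ffun η 1 :=
            Ffun_monoOn hη0 hη1 (AA_pos η z y).le hA1
          have := mul_le_mul_of_nonneg_left hF1
            (mul_nonneg hη0.le (Real.exp_pos (-z)).le)
          linarith
        · exact Eventually.of_forall fun z => exponent_nonpos hη0 z y
      have hexp1 : Tendsto
          (fun z => Real.exp (-(AA η z y) - η * Real.exp (-z) * Ffun η (AA η z y)))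
          atTop (nhds 1) := by
        have := (Real.continuous_exp.tendsto 0).comp hE0
        simpa [Function.comp_def, Real.exp_zero] using this
      have := hexp1.mul_const (lam y)
      simpa [itg, one_mul] using this
    rw [lam_integral] at h1
    have hfun : Gxi η = fun z => ∫ y, itg η z y := funext hGxi
    rw [hfun]
    exact h1
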